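/- Let Q = Q(N,(m_i),(X_i)) be the quandle of the construction. If d is a displacement of Q (an element of Dis(Q)), then there exists an element n ∈ N such that d(x) = x + n + X_i for every i ∈ I and every x ∈ Q_i. -/

import Mathlib

open LaurentPolynomial

set_option synthInstance.maxHeartbeats 1000000
set_option maxHeartbeats 1000000

noncomputable section

/-- The ring `Λ = ℤ[t,t⁻¹]` of Laurent polynomials with integer coefficients. -/
abbrev Λ : Type := LaurentPolynomial ℤ

/-- The variable `t ∈ Λ`. -/
abbrev tL : Λ := T 1

/-- A medial quandle structure on a type `Q`: an idempotent binary operation whose right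
translations are bijections, satisfying the medial law. -/
structure MedialQuandleStr (Q : Type*) where
  op : Q → Q → Q
  idem : ∀ x, op x x = x
  bij : ∀ y, Function.Bijective fun x => op x y
  medial : ∀ w x y z, op (op w x) (op y z) = op (op w y) (op x z)

/-- A quandle structure on a type `T`. -/
structure QuandleStr (T : Type*) where
  op : T → T → T
  idem : ∀ x, op x x = x
  bij : ∀ y, Function.Bijective fun x => op x y
  distrib : ∀ x y z, op (op x y) z = op (op x z) (op y z)

namespace MedialQuandleStr

variable {Q : Type*} (s : MedialQuandleStr Q)

/-- The translation `β_y : x ↦ x ▷ y`, as a permutation of `Q`. -/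
def β (y : Q) : Equiv.Perm Q := Equiv.ofBijective _ (s.bij y)

/-- `β(Q)`: the subgroup of permutations generated by the translations. -/
def transGroup : Subgroup (Equiv.Perm Q) := Subgroup.closure (Set.range s.β)

/-- The displacement group `Dis(Q)`, generated by the elementary displacements
`β_y β_z⁻¹`. -/
def Dis : Subgroup (Equiv.Perm Q) :=
  Subgroup.closure {d : Equiv.Perm Q | ∃ y z, d = s.β y * (s.β z)⁻¹}

/-- The orbit of `q`: the smallest subset of `Q` containing `q` and closed under the
action of `β(Q)`. -/
def orbit (q : Q) : Set Q := {x | ∃ g ∈ s.transGroup, g q = x}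

end MedialQuandleStr

section Construction

variable {M : Type*} [AddCommGroup M] [Module Λ M] {I : Type*}

/-- The carrier of the quandle `Q(N,(m_i),(X_i))`: the disjoint union of the quotients
`Q_i = N/X_i`. -/
def QCar (N : Submodule Λ M) (X : I → Submodule Λ ↥N) : Type _ :=
  Σ i : I, ↥N ⧸ X i

/-- The condition `(1-t)·X_i = 0` for all `i`. -/
def annCond (N : Submodule Λ M) (X : I → Submodule Λ ↥N) : Prop :=
  ∀ i, ∀ x ∈ X i, (1 - tL) • (x : ↥N) = 0

/-- Multiplication by `1-t`, descended from `N/X_j` to `N` (well defined since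
`(1-t)·X_j = 0`). -/
def oneSubT (N : Submodule Λ M) {X : I → Submodule Λ ↥N} (h : annCond N X) (j : I) :
    (↥N ⧸ X j) →ₗ[Λ] ↥N :=
  Submodule.liftQ (X j) ((1 - tL) • (LinearMap.id : ↥N →ₗ[Λ] ↥N))
    (fun x hx => by simpa using h j x hx)

/-- The operation of `Q(N,(m_i),(X_i))`: for `x ∈ Q_i` and `y ∈ Q_j`,
`x ▷ y = m_j - m_i + t·x + (1-t)·y + X_i ∈ Q_i`. -/
def qop (N : Submodule Λ M) (m : I → M) {X : I → Submodule Λ ↥N}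
    (hm : ∀ i j, m i - m j ∈ N) (h : annCond N X) :
    QCar N X → QCar N X → QCar N X :=
  fun x y =>
    ⟨x.1, Submodule.Quotient.mk (⟨m y.1 - m x.1, hm y.1 x.1⟩ : ↥N)
        + tL • x.2 + Submodule.Quotient.mk (oneSubT N h y.1 y.2)⟩

end Construction

/-- Every displacement `d` of the quandle `Q(N,(m_i),(X_i))` is of the
form `d(x) = x + n + X_i` for a single element `n ∈ N` (the same `n` for all orbits).
Here `s` is the medial quandle structure on the carrier whose operation is `qop`. -/
theorem stmt12 {M : Type*} [AddCommGroup M] [Module Λ M] {I : Type*} [Nonempty I]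
    (N : Submodule Λ M) (m : I → M) (X : I → Submodule Λ ↥N)
    (hm : ∀ i j, m i - m j ∈ N) (h : annCond N X)
    (s : MedialQuandleStr (QCar N X)) (hs : s.op = qop N m hm h) :
    ∀ d ∈ s.Dis, ∃ n : ↥N, ∀ (i : I) (x : ↥N ⧸ X i),
      d ⟨i, x⟩ = ⟨i, x + Submodule.Quotient.mk n⟩ := by
  -- formula for the translation β_y on the component `i`
  have key : ∀ (y : QCar N X) (i : I) (xq : ↥N ⧸ X i),
      s.β y ⟨i, xq⟩ = ⟨i, Submodule.Quotient.mk (⟨m y.1 - m i, hm y.1 i⟩ : ↥N)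
        + tL • xq + Submodule.Quotient.mk (oneSubT N h y.1 y.2)⟩ := by
    intro y i xq
    show s.op ⟨i, xq⟩ y = _
    rw [hs]; rfl
  intro d hd
  induction hd using Subgroup.closure_induction with
  | mem g hg =>
      obtain ⟨y, z, rfl⟩ := hg
      refine ⟨⟨m y.1 - m z.1, hm y.1 z.1⟩ + oneSubT N h y.1 y.2 - oneSubT N h z.1 z.2,
        ?_⟩
      intro i x
      have hgx : (s.β y * (s.β z)⁻¹) ⟨i, x⟩ = s.β y ((s.β z)⁻¹ ⟨i, x⟩) := rfl
      rcases hww : (s.β z)⁻¹ ⟨i, x⟩ with ⟨i', wq⟩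
      have hw2 : s.β z ⟨i', wq⟩ = ⟨i, x⟩ := by
        rw [← hww]; exact Equiv.apply_symm_apply _ _
      rw [key] at hw2
      obtain ⟨rfl, hx⟩ := Sigma.mk.inj_iff.mp hw2
      have hx' : Submodule.Quotient.mk (⟨m z.1 - m i', hm z.1 i'⟩ : ↥N)
          + tL • wq + Submodule.Quotient.mk (oneSubT N h z.1 z.2) = x := eq_of_heq hx
      rw [hgx, hww, key]
      refine congrArg (Sigma.mk i') ?_
      rw [← hx']
      have hN : (⟨m y.1 - m i', hm y.1 i'⟩ : ↥N) + oneSubT N h y.1 y.2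
          = (⟨m z.1 - m i', hm z.1 i'⟩ : ↥N) + oneSubT N h z.1 z.2
            + ((⟨m y.1 - m z.1, hm y.1 z.1⟩ : ↥N) + oneSubT N h y.1 y.2
                - oneSubT N h z.1 z.2) := by
        ext; push_cast; abel
      calc Submodule.Quotient.mk (⟨m y.1 - m i', hm y.1 i'⟩ : ↥N) + tL • wq
            + Submodule.Quotient.mk (oneSubT N h y.1 y.2)
          = Submodule.Quotient.mk ((⟨m y.1 - m i', hm y.1 i'⟩ : ↥N)
              + oneSubT N h y.1 y.2) + tL • wq := by
            rw [Submodule.Quotient.mk_add]; abel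
        _ = Submodule.Quotient.mk ((⟨m z.1 - m i', hm z.1 i'⟩ : ↥N)
              + oneSubT N h z.1 z.2
              + ((⟨m y.1 - m z.1, hm y.1 z.1⟩ : ↥N) + oneSubT N h y.1 y.2
                - oneSubT N h z.1 z.2)) + tL • wq := by rw [hN]
        _ = Submodule.Quotient.mk (⟨m z.1 - m i', hm z.1 i'⟩ : ↥N) + tL • wq
            + Submodule.Quotient.mk (oneSubT N h z.1 z.2)
            + Submodule.Quotient.mk ((⟨m y.1 - m z.1, hm y.1 z.1⟩ : ↥N)
                + oneSubT N h y.1 y.2 - oneSubT N h z.1 z.2) := by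
            rw [Submodule.Quotient.mk_add, Submodule.Quotient.mk_add]; abel
  | one =>
      exact ⟨0, fun i x => by simp; rfl⟩
  | mul g₁ g₂ hg₁ hg₂ ih₁ ih₂ =>
      obtain ⟨n₁, hn₁⟩ := ih₁
      obtain ⟨n₂, hn₂⟩ := ih₂
      refine ⟨n₂ + n₁, fun i x => ?_⟩
      have : (g₁ * g₂) ⟨i, x⟩ = g₁ (g₂ ⟨i, x⟩) := rfl
      rw [this, hn₂, hn₁, Submodule.Quotient.mk_add, add_assoc]
  | inv g hg ih =>
      obtain ⟨n, hn⟩ := ih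
      refine ⟨-n, fun i x => ?_⟩
      have hgi : g ⟨i, x + Submodule.Quotient.mk (-n : ↥N)⟩ = ⟨i, x⟩ := by
        rw [hn]
        refine congrArg (Sigma.mk i) ?_
        rw [add_assoc, ← Submodule.Quotient.mk_add]
        simp
      calc g⁻¹ ⟨i, x⟩ = g⁻¹ (g ⟨i, x + Submodule.Quotient.mk (-n : ↥N)⟩) := by rw [hgi]
        _ = _ := by exact Equiv.symm_apply_apply g _
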